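/- Let a>0, b>0, c≥−1/b, φ₀∈ℝ, and let k∈ℂ with k≠0. There exists a twice continuously differentiable function ψ:[-a,a]→ℂ, not identically zero, with −ψ″(x)=k²ψ(x) for all x∈[-a,a], ψ(a)=√(1+bc)·e^{iφ₀}·ψ(−a)+b·ψ′(−a) and ψ′(a)=c·ψ(−a)+√(1+bc)·e^{−iφ₀}·ψ′(−a), if and only if −2k + 2k·cos(2ak)·√(1+bc)·cos(φ₀) + (bk²−c)·sin(2ak) = 0. -/

import Mathlib

/-- A nontrivial twice continuously differentiable solution of `-ψ'' = k²ψ`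
on `[-a, a]` with connected PT-symmetric boundary conditions given by
parameters `(b, c, φ₀)`. -/
def IsConnectedSol (a b c φ₀ : ℝ) (k : ℂ) (ψ : ℝ → ℂ) : Prop :=
  ∃ ψ' ψ'' : ℝ → ℂ,
    (∀ x ∈ Set.Icc (-a) a, HasDerivAt ψ (ψ' x) x) ∧
    (∀ x ∈ Set.Icc (-a) a, HasDerivAt ψ' (ψ'' x) x) ∧
    ContinuousOn ψ'' (Set.Icc (-a) a) ∧
    (∃ x ∈ Set.Icc (-a) a, ψ x ≠ 0) ∧
    (∀ x ∈ Set.Icc (-a) a, -ψ'' x = k ^ 2 * ψ x) ∧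
    ψ a = ((Real.sqrt (1 + b * c) : ℝ) : ℂ) * Complex.exp (Complex.I * (φ₀ : ℂ)) * ψ (-a)
      + (b : ℂ) * ψ' (-a) ∧
    ψ' a = (c : ℂ) * ψ (-a)
      + ((Real.sqrt (1 + b * c) : ℝ) : ℂ) * Complex.exp (-(Complex.I * (φ₀ : ℂ))) * ψ' (-a)

open Complex Set

/-- derivative of `x ↦ exp (w x)` as a function on `ℝ`. -/
lemma hasDerivAt_cexp_mul (w : ℂ) (x : ℝ) :
    HasDerivAt (fun t : ℝ => Complex.exp (w * t)) (w * Complex.exp (w * x)) x := by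
  have h1 : HasDerivAt (fun z : ℂ => Complex.exp (w * z)) (w * Complex.exp (w * x)) (x : ℂ) := by
    exact ((Complex.hasDerivAt_exp (w * x)).comp (x : ℂ) ((hasDerivAt_id (x : ℂ)).const_mul w)).congr_deriv (by ring)
  exact h1.comp_ofReal

/-- Construction: any kernel vector of the `2×2` system gives a solution. -/
lemma aux_construct (a b c φ₀ : ℝ) (k : ℂ) (ha : 0 < a) (hk : k ≠ 0) (α β : ℂ)
    (hne : ¬(α = 0 ∧ β = 0))
    (hr1 : (Complex.exp (I*k*(a:ℂ)) - ((Real.sqrt (1 + b * c) : ℝ) : ℂ) * Complex.exp (I*(φ₀:ℂ)) * Complex.exp (-(I*k)*(a:ℂ))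
        - (b:ℂ)*(I*k)*Complex.exp (-(I*k)*(a:ℂ))) * α
      + (Complex.exp (-(I*k)*(a:ℂ)) - ((Real.sqrt (1 + b * c) : ℝ) : ℂ) * Complex.exp (I*(φ₀:ℂ)) * Complex.exp (I*k*(a:ℂ))
        + (b:ℂ)*(I*k)*Complex.exp (I*k*(a:ℂ))) * β = 0)
    (hr2 : ((I*k)*Complex.exp (I*k*(a:ℂ)) - (c:ℂ)*Complex.exp (-(I*k)*(a:ℂ))
        - ((Real.sqrt (1 + b * c) : ℝ) : ℂ) * Complex.exp (-(I*(φ₀:ℂ))) * (I*k)*Complex.exp (-(I*k)*(a:ℂ))) * α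
      + (-((I*k)*Complex.exp (-(I*k)*(a:ℂ))) - (c:ℂ)*Complex.exp (I*k*(a:ℂ))
        + ((Real.sqrt (1 + b * c) : ℝ) : ℂ) * Complex.exp (-(I*(φ₀:ℂ))) * (I*k)*Complex.exp (I*k*(a:ℂ))) * β = 0) :
    IsConnectedSol a b c φ₀ k (fun x : ℝ => α * Complex.exp (I*k*(x:ℂ)) + β * Complex.exp (-(I*k)*(x:ℂ))) := by
  have hIk : I * k ≠ 0 := mul_ne_zero Complex.I_ne_zero hk
  have hd : ∀ x : ℝ, HasDerivAt (fun x : ℝ => α * Complex.exp (I*k*(x:ℂ)) + β * Complex.exp (-(I*k)*(x:ℂ)))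
      ((I*k) * (α * Complex.exp (I*k*(x:ℂ)) - β * Complex.exp (-(I*k)*(x:ℂ)))) x := by
    intro x
    have h := ((hasDerivAt_cexp_mul (I*k) x).const_mul α).add
      ((hasDerivAt_cexp_mul (-(I*k)) x).const_mul β)
    exact h.congr_deriv (by ring)
  have hd' : ∀ x : ℝ, HasDerivAt (fun x : ℝ => (I*k) * (α * Complex.exp (I*k*(x:ℂ)) - β * Complex.exp (-(I*k)*(x:ℂ))))
      ((I*k)^2 * (α * Complex.exp (I*k*(x:ℂ)) + β * Complex.exp (-(I*k)*(x:ℂ)))) x := by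
    intro x
    have h := (((hasDerivAt_cexp_mul (I*k) x).const_mul α).sub
      ((hasDerivAt_cexp_mul (-(I*k)) x).const_mul β)).const_mul (I*k)
    exact h.congr_deriv (by ring)
  have hIsq : (I*k)^2 = -(k^2) := by rw [mul_pow, Complex.I_sq]; ring
  have hEa : Complex.exp (I*k*((-a:ℝ):ℂ)) = Complex.exp (-(I*k)*(a:ℂ)) := by
    rw [Complex.ofReal_neg]; congr 1; ring
  have hFa : Complex.exp (-(I*k)*((-a:ℝ):ℂ)) = Complex.exp (I*k*(a:ℂ)) := by
    rw [Complex.ofReal_neg]; congr 1; ring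
  refine ⟨fun x : ℝ => (I*k) * (α * Complex.exp (I*k*(x:ℂ)) - β * Complex.exp (-(I*k)*(x:ℂ))),
    fun x : ℝ => (I*k)^2 * (α * Complex.exp (I*k*(x:ℂ)) + β * Complex.exp (-(I*k)*(x:ℂ))),
    fun x _ => hd x, fun x _ => hd' x, ?_, ?_, ?_, ?_, ?_⟩
  · apply Continuous.continuousOn
    fun_prop
  · -- nontriviality
    by_contra h
    push_neg at h
    have h0m : (0:ℝ) ∈ Icc (-a) a := ⟨by linarith, ha.le⟩
    have hψ0 : α + β = 0 := by simpa using h 0 h0m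
    have heq : (fun x : ℝ => α * Complex.exp (I*k*(x:ℂ)) + β * Complex.exp (-(I*k)*(x:ℂ)))
        =ᶠ[nhds (0:ℝ)] fun _ => (0:ℂ) :=
      Filter.eventuallyEq_of_mem (Icc_mem_nhds (by linarith) ha) h
    have hzero : HasDerivAt (fun x : ℝ => α * Complex.exp (I*k*(x:ℂ)) + β * Complex.exp (-(I*k)*(x:ℂ))) 0 0 :=
      (hasDerivAt_const (0:ℝ) (0:ℂ)).congr_of_eventuallyEq heq
    have huniq := (hd 0).unique hzero
    have hval : (I*k) * (α - β) = 0 := by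
      simpa using huniq
    have hab : α - β = 0 := by
      rcases mul_eq_zero.mp hval with h' | h'
      · exact absurd h' hIk
      · exact h'
    have hα : α = 0 := by linear_combination (hψ0 + hab) / 2
    have hβ : β = 0 := by linear_combination (hψ0 - hab) / 2
    exact hne ⟨hα, hβ⟩
  · -- ODE
    intro x _
    simp only []
    linear_combination (-(α * Complex.exp (I*k*(x:ℂ)) + β * Complex.exp (-(I*k)*(x:ℂ)))) * hIsq
  · -- BC1
    simp only [hEa, hFa]
    linear_combination hr1
  · -- BC2
    simp only [hEa, hFa]
    linear_combination hr2

/-- Forward: any solution produces a kernel vector of the `2×2` system. -/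
lemma aux_kernel (a b c φ₀ : ℝ) (k : ℂ) (ha : 0 < a) (hk : k ≠ 0) (ψ : ℝ → ℂ)
    (h : IsConnectedSol a b c φ₀ k ψ) :
    ∃ α β : ℂ, ¬(α = 0 ∧ β = 0) ∧
    ((Complex.exp (I*k*(a:ℂ)) - ((Real.sqrt (1 + b * c) : ℝ) : ℂ) * Complex.exp (I*(φ₀:ℂ)) * Complex.exp (-(I*k)*(a:ℂ))
        - (b:ℂ)*(I*k)*Complex.exp (-(I*k)*(a:ℂ))) * α
      + (Complex.exp (-(I*k)*(a:ℂ)) - ((Real.sqrt (1 + b * c) : ℝ) : ℂ) * Complex.exp (I*(φ₀:ℂ)) * Complex.exp (I*k*(a:ℂ))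
        + (b:ℂ)*(I*k)*Complex.exp (I*k*(a:ℂ))) * β = 0) ∧
    (((I*k)*Complex.exp (I*k*(a:ℂ)) - (c:ℂ)*Complex.exp (-(I*k)*(a:ℂ))
        - ((Real.sqrt (1 + b * c) : ℝ) : ℂ) * Complex.exp (-(I*(φ₀:ℂ))) * (I*k)*Complex.exp (-(I*k)*(a:ℂ))) * α
      + (-((I*k)*Complex.exp (-(I*k)*(a:ℂ))) - (c:ℂ)*Complex.exp (I*k*(a:ℂ))
        + ((Real.sqrt (1 + b * c) : ℝ) : ℂ) * Complex.exp (-(I*(φ₀:ℂ))) * (I*k)*Complex.exp (I*k*(a:ℂ))) * β = 0) := by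
  obtain ⟨ψ', ψ'', hd1, hd2, hcont, ⟨x₀, hx₀, hx₀ne⟩, hode, hbc1, hbc2⟩ := h
  have hIk : I * k ≠ 0 := mul_ne_zero Complex.I_ne_zero hk
  have haa : -a ≤ a := by linarith
  have hEa : Complex.exp (I*k*((-a:ℝ):ℂ)) = Complex.exp (-(I*k)*(a:ℂ)) := by
    rw [Complex.ofReal_neg]; congr 1; ring
  have hFa : Complex.exp (-(I*k)*((-a:ℝ):ℂ)) = Complex.exp (I*k*(a:ℂ)) := by
    rw [Complex.ofReal_neg]; congr 1; ring
  have hEF : Complex.exp (I*k*(a:ℂ)) * Complex.exp (-(I*k)*(a:ℂ)) = 1 := by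
    rw [← Complex.exp_add, show I*k*(a:ℂ) + -(I*k)*(a:ℂ) = 0 by ring, Complex.exp_zero]
  have hCψ : ContinuousOn ψ (Icc (-a) a) := fun x hx => ((hd1 x hx).continuousAt).continuousWithinAt
  have hCψ' : ContinuousOn ψ' (Icc (-a) a) := fun x hx => ((hd2 x hx).continuousAt).continuousWithinAt
  have hexp1 : Continuous fun x : ℝ => Complex.exp (I*k*(x:ℂ)) := by fun_prop
  have hexp2 : Continuous fun x : ℝ => Complex.exp (-(I*k)*(x:ℂ)) := by fun_prop
  -- constancy of (ψ' - ikψ) e^{ikx}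
  have hfc : ∀ x ∈ Icc (-a) a, (ψ' x - I*k*ψ x) * Complex.exp (I*k*(x:ℂ))
      = (ψ' (-a) - I*k*ψ (-a)) * Complex.exp (I*k*((-a:ℝ):ℂ)) := by
    apply constant_of_has_deriv_right_zero
    · exact (hCψ'.sub (continuousOn_const.mul hCψ)).mul (hexp1.continuousOn)
    · intro x hx
      have hx' : x ∈ Icc (-a) a := Ico_subset_Icc_self hx
      have h1 := (hd2 x hx').sub ((hd1 x hx').const_mul (I*k))
      have h3 := h1.mul (hasDerivAt_cexp_mul (I*k) x)
      have hval : (ψ'' x - I*k*ψ' x) * Complex.exp (I*k*(x:ℂ))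
          + (ψ' x - I*k*ψ x) * ((I*k) * Complex.exp (I*k*(x:ℂ))) = 0 := by
        linear_combination (-(Complex.exp (I*k*(x:ℂ)))) * (hode x hx')
          + (-(k^2) * ψ x * Complex.exp (I*k*(x:ℂ))) * Complex.I_sq
      exact (h3.congr_deriv hval).hasDerivWithinAt
  -- constancy of (ψ' + ikψ) e^{-ikx}
  have hgc : ∀ x ∈ Icc (-a) a, (ψ' x + I*k*ψ x) * Complex.exp (-(I*k)*(x:ℂ))
      = (ψ' (-a) + I*k*ψ (-a)) * Complex.exp (-(I*k)*((-a:ℝ):ℂ)) := by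
    apply constant_of_has_deriv_right_zero
    · exact (hCψ'.add (continuousOn_const.mul hCψ)).mul (hexp2.continuousOn)
    · intro x hx
      have hx' : x ∈ Icc (-a) a := Ico_subset_Icc_self hx
      have h1 := (hd2 x hx').add ((hd1 x hx').const_mul (I*k))
      have h3 := h1.mul (hasDerivAt_cexp_mul (-(I*k)) x)
      have hval : (ψ'' x + I*k*ψ' x) * Complex.exp (-(I*k)*(x:ℂ))
          + (ψ' x + I*k*ψ x) * ((-(I*k)) * Complex.exp (-(I*k)*(x:ℂ))) = 0 := by
        linear_combination (-(Complex.exp (-(I*k)*(x:ℂ)))) * (hode x hx')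
          + (-(k^2) * ψ x * Complex.exp (-(I*k)*(x:ℂ))) * Complex.I_sq
      exact (h3.congr_deriv hval).hasDerivWithinAt
  have h1 := hfc a ⟨haa, le_refl a⟩
  have h2 := hgc a ⟨haa, le_refl a⟩
  rw [hEa] at h1
  rw [hFa] at h2
  -- h1 : (ψ' a - ikψ a) E = (ψ'(-a) - ikψ(-a)) F ; h2 : (ψ' a + ikψ a) F = (ψ'(-a)+ikψ(-a)) E
  refine ⟨(ψ' (-a) + I*k*ψ (-a)) * Complex.exp (I*k*(a:ℂ)),
      -((ψ' (-a) - I*k*ψ (-a)) * Complex.exp (-(I*k)*(a:ℂ))), ?_, ?_, ?_⟩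
  · rintro ⟨hα, hβ⟩
    have hv : ψ' (-a) + I*k*ψ (-a) = 0 :=
      by rcases mul_eq_zero.mp hα with h' | h'; exact h'; exact absurd h' (Complex.exp_ne_zero _)
    have hu : ψ' (-a) - I*k*ψ (-a) = 0 := by
      have := neg_eq_zero.mp hβ
      rcases mul_eq_zero.mp this with h' | h'; exact h'; exact absurd h' (Complex.exp_ne_zero _)
    have hux := hfc x₀ hx₀
    have hvx := hgc x₀ hx₀
    rw [hu, zero_mul] at hux
    rw [hv, zero_mul] at hvx
    have hu0 : ψ' x₀ - I*k*ψ x₀ = 0 := by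
      rcases mul_eq_zero.mp hux with h' | h'; exact h'; exact absurd h' (Complex.exp_ne_zero _)
    have hv0 : ψ' x₀ + I*k*ψ x₀ = 0 := by
      rcases mul_eq_zero.mp hvx with h' | h'; exact h'; exact absurd h' (Complex.exp_ne_zero _)
    have : (2*(I*k)) * ψ x₀ = 0 := by linear_combination hv0 - hu0
    rcases mul_eq_zero.mp this with h' | h'
    · have : (2:ℂ) ≠ 0 := two_ne_zero
      rcases mul_eq_zero.mp h' with h'' | h''
      · exact this h''
      · exact hIk h''
    · exact hx₀ne h'
  · linear_combination (2*(I*k)*Complex.exp (I*k*(a:ℂ))*Complex.exp (-(I*k)*(a:ℂ))) * hbc1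
      - Complex.exp (I*k*(a:ℂ)) * h2 + Complex.exp (-(I*k)*(a:ℂ)) * h1
  · linear_combination (2*(I*k)*Complex.exp (I*k*(a:ℂ))*Complex.exp (-(I*k)*(a:ℂ))) * hbc2
      - ((I*k)*Complex.exp (I*k*(a:ℂ))) * h2 - ((I*k)*Complex.exp (-(I*k)*(a:ℂ))) * h1

/-- the eigenvalue equation
`-2k + 2k cos(2ak) √(1+bc) cos φ₀ + (bk² - c) sin(2ak) = 0` characterizes the
eigenvalues `λ = k²` of the zero-curvature Hamiltonian with connected
PT-symmetric boundary conditions. -/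
theorem pt_connected_eigenvalue_equation
    (a b c φ₀ : ℝ) (ha : 0 < a) (hb : 0 < b) (hc : -(1 / b) ≤ c)
    (k : ℂ) (hk : k ≠ 0) :
    (∃ ψ : ℝ → ℂ, IsConnectedSol a b c φ₀ k ψ) ↔
      -(2 * k) + 2 * k * Complex.cos (2 * (a : ℂ) * k)
          * ((Real.sqrt (1 + b * c) * Real.cos φ₀ : ℝ) : ℂ)
        + ((b : ℂ) * k ^ 2 - (c : ℂ)) * Complex.sin (2 * (a : ℂ) * k) = 0 := by
  have hbc : (0:ℝ) ≤ 1 + b * c := by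
    have h1 : b * (-(1/b)) ≤ b * c := mul_le_mul_of_nonneg_left hc hb.le
    have h2 : b * (1/b) = 1 := by field_simp
    nlinarith
  have hs : (((Real.sqrt (1 + b * c) : ℝ) : ℂ))^2 = 1 + (b:ℂ)*(c:ℂ) := by
    norm_cast
    rw [Real.sq_sqrt hbc]
  have hee : Complex.exp (I*(φ₀:ℂ)) * Complex.exp (-(I*(φ₀:ℂ))) = 1 := by
    rw [← Complex.exp_add, add_neg_cancel, Complex.exp_zero]
  have hEF : Complex.exp (I*k*(a:ℂ)) * Complex.exp (-(I*k)*(a:ℂ)) = 1 := by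
    rw [← Complex.exp_add, show I*k*(a:ℂ) + -(I*k)*(a:ℂ) = 0 by ring, Complex.exp_zero]
  set s : ℂ := ((Real.sqrt (1 + b * c) : ℝ) : ℂ) with hs_def
  set e : ℂ := Complex.exp (I*(φ₀:ℂ)) with he_def
  set eb : ℂ := Complex.exp (-(I*(φ₀:ℂ))) with heb_def
  set E : ℂ := Complex.exp (I*k*(a:ℂ)) with hE_def
  set F : ℂ := Complex.exp (-(I*k)*(a:ℂ)) with hF_def
  have hc2 : Complex.cos (2*(a:ℂ)*k) = (E^2 + F^2)/2 := by
    rw [hE_def, hF_def]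
    have h := Complex.two_cos (x := 2*(a:ℂ)*k)
    rw [show (2*(a:ℂ)*k)*I = (I*k*(a:ℂ)) + (I*k*(a:ℂ)) by ring,
      show -(2*(a:ℂ)*k)*I = (-(I*k)*(a:ℂ)) + (-(I*k)*(a:ℂ)) by ring,
      Complex.exp_add, Complex.exp_add, ← sq, ← sq] at h
    linear_combination h / 2
  have hs2 : Complex.sin (2*(a:ℂ)*k) = (F^2 - E^2)*I/2 := by
    rw [hE_def, hF_def]
    have h := Complex.two_sin (x := 2*(a:ℂ)*k)
    rw [show (2*(a:ℂ)*k)*I = (I*k*(a:ℂ)) + (I*k*(a:ℂ)) by ring,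
      show -(2*(a:ℂ)*k)*I = (-(I*k)*(a:ℂ)) + (-(I*k)*(a:ℂ)) by ring,
      Complex.exp_add, Complex.exp_add, ← sq, ← sq] at h
    linear_combination h / 2
  have hph : ((Real.cos φ₀ : ℝ):ℂ) = (e + eb)/2 := by
    rw [he_def, heb_def, Complex.ofReal_cos]
    have h := Complex.two_cos (x := (φ₀:ℂ))
    rw [show ((φ₀:ℂ))*I = I*(φ₀:ℂ) by ring, show -(φ₀:ℂ)*I = -(I*(φ₀:ℂ)) by ring] at h
    linear_combination h / 2
  have hcast : ((Real.sqrt (1 + b * c) * Real.cos φ₀ : ℝ) : ℂ) = s * ((Real.cos φ₀ : ℝ):ℂ) := by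
    push_cast; ring
  -- the determinant identity
  have main : (E - s*e*F - (b:ℂ)*(I*k)*F) * (-((I*k)*F) - (c:ℂ)*E + s*eb*(I*k)*E)
      - (F - s*e*E + (b:ℂ)*(I*k)*E) * ((I*k)*E - (c:ℂ)*F - s*eb*(I*k)*F)
      = 2*I * (-(2 * k) + 2 * k * Complex.cos (2 * (a : ℂ) * k)
          * ((Real.sqrt (1 + b * c) * Real.cos φ₀ : ℝ) : ℂ)
        + ((b : ℂ) * k ^ 2 - (c : ℂ)) * Complex.sin (2 * (a : ℂ) * k)) := by
    rw [hcast, hc2, hs2, hph]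
    linear_combination (-4*Complex.I*k) * hEF + (-2*Complex.I*k*(1+(b:ℂ)*(c:ℂ))*E*F) * hee
      + (-2*Complex.I*k*e*eb*E*F) * hs + (-(c:ℂ)*(E^2-F^2)) * Complex.I_sq
  constructor
  · rintro ⟨ψ, hψ⟩
    obtain ⟨α, β, hne, hr1, hr2⟩ := aux_kernel a b c φ₀ k ha hk ψ hψ
    rw [← hs_def, ← he_def, ← hE_def, ← hF_def] at hr1
    rw [← hs_def, ← heb_def, ← hE_def, ← hF_def] at hr2
    have hdet : (E - s*e*F - (b:ℂ)*(I*k)*F) * (-((I*k)*F) - (c:ℂ)*E + s*eb*(I*k)*E)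
        - (F - s*e*E + (b:ℂ)*(I*k)*E) * ((I*k)*E - (c:ℂ)*F - s*eb*(I*k)*F) = 0 := by
      rcases not_and_or.mp hne with hα | hβ
      · have hα' : (((E - s*e*F - (b:ℂ)*(I*k)*F) * (-((I*k)*F) - (c:ℂ)*E + s*eb*(I*k)*E)
            - (F - s*e*E + (b:ℂ)*(I*k)*E) * ((I*k)*E - (c:ℂ)*F - s*eb*(I*k)*F))) * α = 0 := by
          linear_combination (-((I*k)*F) - (c:ℂ)*E + s*eb*(I*k)*E) * hr1
            - (F - s*e*E + (b:ℂ)*(I*k)*E) * hr2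
        rcases mul_eq_zero.mp hα' with h' | h'
        · exact h'
        · exact absurd h' hα
      · have hβ' : (((E - s*e*F - (b:ℂ)*(I*k)*F) * (-((I*k)*F) - (c:ℂ)*E + s*eb*(I*k)*E)
            - (F - s*e*E + (b:ℂ)*(I*k)*E) * ((I*k)*E - (c:ℂ)*F - s*eb*(I*k)*F))) * β = 0 := by
          linear_combination (E - s*e*F - (b:ℂ)*(I*k)*F) * hr2
            - ((I*k)*E - (c:ℂ)*F - s*eb*(I*k)*F) * hr1
        rcases mul_eq_zero.mp hβ' with h' | h'
        · exact h'
        · exact absurd h' hβ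
    rw [main] at hdet
    rcases mul_eq_zero.mp hdet with h' | h'
    · exfalso
      rcases mul_eq_zero.mp h' with h'' | h''
      · exact two_ne_zero h''
      · exact Complex.I_ne_zero h''
    · exact h'
  · intro hT
    have hdet : (E - s*e*F - (b:ℂ)*(I*k)*F) * (-((I*k)*F) - (c:ℂ)*E + s*eb*(I*k)*E)
        - (F - s*e*E + (b:ℂ)*(I*k)*E) * ((I*k)*E - (c:ℂ)*F - s*eb*(I*k)*F) = 0 := by
      rw [main, hT, mul_zero]
    set M11 : ℂ := E - s*e*F - (b:ℂ)*(I*k)*F with hM11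
    set M12 : ℂ := F - s*e*E + (b:ℂ)*(I*k)*E with hM12
    set M21 : ℂ := (I*k)*E - (c:ℂ)*F - s*eb*(I*k)*F with hM21
    set M22 : ℂ := -((I*k)*F) - (c:ℂ)*E + s*eb*(I*k)*E with hM22
    -- choose a kernel vector
    have : ∃ α β : ℂ, ¬(α = 0 ∧ β = 0) ∧ M11 * α + M12 * β = 0 ∧ M21 * α + M22 * β = 0 := by
      by_cases h1 : M11 = 0 ∧ M12 = 0
      · by_cases h2 : M21 = 0 ∧ M22 = 0
        · exact ⟨1, 0, by simp, by rw [h1.1, h1.2]; ring, by rw [h2.1, h2.2]; ring⟩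
        · refine ⟨M22, -M21, ?_, by rw [h1.1, h1.2]; ring, by ring⟩
          rintro ⟨hA, hB⟩
          exact h2 ⟨neg_eq_zero.mp hB, hA⟩
      · refine ⟨M12, -M11, ?_, by ring, by linear_combination -hdet⟩
        rintro ⟨hA, hB⟩
        exact h1 ⟨neg_eq_zero.mp hB, hA⟩
    obtain ⟨α, β, hne, hr1, hr2⟩ := this
    rw [hM11, hM12] at hr1
    rw [hM21, hM22] at hr2
    rw [hs_def, he_def, hE_def, hF_def] at hr1
    rw [hs_def, heb_def, hE_def, hF_def] at hr2
    exact ⟨_, aux_construct a b c φ₀ k ha hk α β hne hr1 hr2⟩
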